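/- In the Fibonacci word (the fixed point of the substitution 0→01, 1→0, starting from 0), the position of the n-th occurrence of the letter 0 is ⌊nφ⌋ and the position of the n-th occurrence of the letter 1 is ⌊nφ²⌋, where φ = (1+√5)/2 (positions indexed starting from 1). -/

import Mathlib

/-- The Fibonacci substitution 0 ↦ 01, 1 ↦ 0, applied to a word. -/
def fibSub (w : List ℕ) : List ℕ :=
  w.flatMap (fun j => if j = 0 then [0, 1] else [0])

/-- The Fibonacci word (0-indexed): the fixed point of 0 ↦ 01, 1 ↦ 0 starting from 0. -/
def fibWord (n : ℕ) : ℕ := (fibSub^[n + 1] [0]).getD n 0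

/-- 1-based position of the n-th (1-based) occurrence of the letter `j` in the Fibonacci word. -/
noncomputable def fibPos (j n : ℕ) : ℕ :=
  Nat.nth (fun m => fibWord m = j) (n - 1) + 1

noncomputable def φ : ℝ := (1 + Real.sqrt 5) / 2

namespace FibAux
open Real

def W (k : ℕ) : List ℕ := fibSub^[k] [0]
noncomputable def gr : ℝ := goldenRatio
def Bdef (m : ℕ) : Prop := ∃ k : ℕ, 1 ≤ k ∧ ⌊(k : ℝ) * gr⌋ = (m : ℤ)

lemma fibSub_append (a b : List ℕ) : fibSub (a ++ b) = fibSub a ++ fibSub b :=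
  List.flatMap_append ..

lemma fibSub_cons (a : ℕ) (t : List ℕ) :
    fibSub (a :: t) = (if a = 0 then [0, 1] else [0]) ++ fibSub t := by
  simp [fibSub]

lemma length_fibSub (w : List ℕ) : (fibSub w).length = w.length + w.count 0 := by
  induction w with
  | nil => rfl
  | cons a t ih => by_cases h : a = 0 <;> simp [fibSub, List.flatMap, h, List.count_cons] at * <;> omega

lemma count_fibSub (w : List ℕ) : (fibSub w).count 0 = w.length := by
  induction w with
  | nil => rfl
  | cons a t ih => by_cases h : a = 0 <;> simp [fibSub, List.flatMap, h, List.count_cons] at * <;> omega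

lemma W_succ (k : ℕ) : W (k + 1) = fibSub (W k) := Function.iterate_succ_apply' ..

lemma W_prefix (k : ℕ) : W k <+: W (k + 1) := by
  induction k with
  | zero => exact ⟨[1], rfl⟩
  | succ k ih =>
    rw [W_succ, W_succ]
    obtain ⟨t, ht⟩ := ih
    exact ⟨fibSub t, by rw [← fibSub_append, ht]⟩

lemma W_prefix_le {k m : ℕ} (h : k ≤ m) : W k <+: W m := by
  induction m with
  | zero => simp_all
  | succ m ih =>
    rcases Nat.lt_or_ge k (m+1) with h' | h'
    · exact (ih (by omega)).trans (W_prefix m)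
    · have : k = m + 1 := by omega
      simp [this]

lemma length_W_pos (k : ℕ) : 0 < (W k).length := by
  induction k with
  | zero => simp [W]
  | succ k ih => rw [W_succ, length_fibSub]; omega

lemma count_W_pos (k : ℕ) : 0 < (W k).count 0 := by
  cases k with
  | zero => simp [W]
  | succ k => rw [W_succ, count_fibSub]; exact length_W_pos k

lemma lt_length_W (k : ℕ) : k < (W k).length := by
  induction k with
  | zero => simp [W]
  | succ k ih => rw [W_succ, length_fibSub]; have := count_W_pos k; omega

lemma fibWord_eq {k m : ℕ} (h : m < (W k).length) : fibWord m = (W k).getD m 0 := by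
  have h2 : m < (W (m+1)).length := (lt_length_W m).trans_le (W_prefix m).length_le
  show (W (m+1)).getD m 0 = _
  rcases Nat.le_total (m+1) k with hk | hk
  · rw [List.getD_eq_getElem _ _ h2, List.getD_eq_getElem _ _ h,
      (W_prefix_le hk).getElem h2]
  · rw [List.getD_eq_getElem _ _ h2, List.getD_eq_getElem _ _ h,
      (W_prefix_le hk).getElem h]

def Z (n : ℕ) : ℕ := Nat.count (fun m => fibWord m = 0) n
def sig (n : ℕ) : ℕ := n + Z n
def Z1 (n : ℕ) : ℕ := Nat.count (fun m => fibWord m = 1) n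


lemma Z_succ (n : ℕ) : Z (n + 1) = Z n + if fibWord n = 0 then 1 else 0 :=
  Nat.count_succ ..

lemma count_take {k i : ℕ} (h : i ≤ (W k).length) : ((W k).take i).count 0 = Z i := by
  induction i with
  | zero => simp [Z]
  | succ i ih =>
    have hi : i < (W k).length := by omega
    rw [List.take_succ, List.count_append, ih hi.le, Z_succ]
    have : (W k)[i]? = some ((W k)[i]) := List.getElem?_eq_getElem hi
    rw [this]
    have : fibWord i = (W k)[i] := (fibWord_eq hi).trans (List.getD_eq_getElem _ _ hi)
    by_cases h0 : fibWord i = 0 <;> simp [← this, h0, eq_comm]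

lemma key {k i : ℕ} (h : i < (W k).length) :
    fibWord (sig i) = 0 ∧ (fibWord i = 0 → fibWord (sig i + 1) = 1) := by
  set w := W k with hw
  set B : List ℕ := (if w[i] = 0 then [0, 1] else [0]) ++ fibSub (w.drop (i + 1)) with hB
  have hsplit : W (k + 1) = fibSub (w.take i) ++ B := by
    rw [W_succ, ← hw]
    conv_lhs => rw [← List.take_append_drop i w]
    rw [fibSub_append, List.drop_eq_getElem_cons h, fibSub_cons]
  have hlenA : (fibSub (w.take i)).length = sig i := by
    rw [length_fibSub, count_take h.le, List.length_take, min_eq_left h.le]; rfl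
  have hwi : fibWord i = w[i] := (fibWord_eq h).trans (List.getD_eq_getElem _ _ h)
  have hgetD : ∀ j, j < B.length → fibWord (sig i + j) = B.getD j 0 := by
    intro j hj
    have hlt : sig i + j < (W (k+1)).length := by
      rw [hsplit, List.length_append, hlenA]; omega
    rw [fibWord_eq hlt, hsplit, List.getD_append_right _ _ _ _ (by omega), hlenA,
      Nat.add_sub_cancel_left]
  constructor
  · have hB1 : 0 < B.length := by rw [hB]; by_cases h0 : w[i] = 0 <;> simp [h0]
    have := hgetD 0 hB1
    rw [Nat.add_zero] at this
    rw [this, hB]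
    by_cases h0 : w[i] = 0 <;> simp [h0]
  · intro h0
    rw [hwi] at h0
    have hB2 : 1 < B.length := by rw [hB]; simp [h0]
    rw [hgetD 1 hB2, hB, h0]
    simp

lemma fibWord_sig (i : ℕ) : fibWord (sig i) = 0 := (key (lt_length_W i)).1

lemma fibWord_sig_succ {i : ℕ} (h : fibWord i = 0) : fibWord (sig i + 1) = 1 :=
  (key (lt_length_W i)).2 h

lemma sig_zero : sig 0 = 0 := rfl

lemma sig_succ (i : ℕ) : sig (i + 1) = sig i + 1 + if fibWord i = 0 then 1 else 0 := by
  simp only [sig, Z_succ]; omega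

lemma coverage (m : ℕ) : ∃ i, m = sig i ∨ (m = sig i + 1 ∧ fibWord i = 0) := by
  induction m with
  | zero => exact ⟨0, Or.inl rfl⟩
  | succ m ih =>
    obtain ⟨i, hi | ⟨hi, h0⟩⟩ := ih
    · by_cases h0 : fibWord i = 0
      · exact ⟨i, Or.inr ⟨by omega, h0⟩⟩
      · exact ⟨i + 1, Or.inl (by rw [sig_succ]; simp [h0]; omega)⟩
    · exact ⟨i + 1, Or.inl (by rw [sig_succ]; simp [h0]; omega)⟩

lemma fibWord_le_one (m : ℕ) : fibWord m ≤ 1 := by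
  have hmem : ∀ k x, x ∈ W k → x ≤ 1 := by
    intro k
    induction k with
    | zero => intro x hx; simp [W] at hx; omega
    | succ k ih =>
      intro x hx
      rw [W_succ] at hx
      obtain ⟨a, _, hx⟩ := List.mem_flatMap.1 hx
      by_cases h0 : a = 0 <;> simp [h0] at hx <;> omega
  have h : m < (W (m+1)).length := by
    have := lt_length_W (m+1); omega
  rw [fibWord_eq h, List.getD_eq_getElem _ _ h]
  exact hmem _ _ (List.getElem_mem h)

lemma fibWord_eq_zero_iff (m : ℕ) : fibWord m = 0 ↔ ∃ i, sig i = m := by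
  constructor
  · intro h0
    obtain ⟨i, hi | ⟨hi, hw⟩⟩ := coverage m
    · exact ⟨i, hi.symm⟩
    · rw [hi, fibWord_sig_succ hw] at h0; omega
  · rintro ⟨i, rfl⟩; exact fibWord_sig i

lemma fibWord_eq_one_iff (m : ℕ) : fibWord m = 1 ↔ ∃ i, fibWord i = 0 ∧ sig i + 1 = m := by
  constructor
  · intro h1
    obtain ⟨i, hi | ⟨hi, hw⟩⟩ := coverage m
    · rw [hi, fibWord_sig i] at h1; omega
    · exact ⟨i, hw, hi.symm⟩
  · rintro ⟨i, hw, rfl⟩; exact fibWord_sig_succ hw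

lemma Z_sig (n : ℕ) : Z (sig n) = n := by
  induction n with
  | zero => rfl
  | succ n ih =>
    rw [sig_succ]
    by_cases h0 : fibWord n = 0
    · rw [if_pos h0]
      have : Z (sig n + 1 + 1) = Z (sig n) + 1 := by
        rw [Z_succ, Z_succ, fibWord_sig n, fibWord_sig_succ h0]
        simp
      omega
    · rw [if_neg h0]
      rw [Z_succ, fibWord_sig n, ih]
      simp


lemma Z_add_Z1 (n : ℕ) : Z n + Z1 n = n := by
  induction n with
  | zero => rfl
  | succ n ih =>
    rw [Z_succ, Z1, Nat.count_succ, ← Z1]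
    have := fibWord_le_one n
    interval_cases h : fibWord n <;> simp <;> omega

lemma Z1_target (n : ℕ) : Z1 (sig (sig n) + 1) = n := by
  have h1 : Z (sig (sig n) + 1) = sig n + 1 := by
    rw [Z_succ, fibWord_sig (sig n), Z_sig]; simp
  have h2 := Z_add_Z1 (sig (sig n) + 1)
  have h3 : sig (sig n) = sig n + Z (sig n) := rfl
  rw [Z_sig] at h3
  omega

lemma nth_zero_eq (n : ℕ) : Nat.nth (fun m => fibWord m = 0) n = sig n := by
  have := Nat.nth_count (p := fun m => fibWord m = 0) (n := sig n) (fibWord_sig n)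
  rwa [show Nat.count (fun m => fibWord m = 0) (sig n) = n from Z_sig n] at this

lemma nth_one_eq (n : ℕ) : Nat.nth (fun m => fibWord m = 1) n = sig (sig n) + 1 := by
  have hp : fibWord (sig (sig n) + 1) = 1 := fibWord_sig_succ (fibWord_sig n)
  have := Nat.nth_count (p := fun m => fibWord m = 1) hp
  rwa [show Nat.count (fun m => fibWord m = 1) (sig (sig n) + 1) = n from Z1_target n] at this

lemma gr_sq : gr ^ 2 = gr + 1 := goldenRatio_sq
lemma one_lt_gr : 1 < gr := one_lt_goldenRatio
lemma gr_lt_two : gr < 2 := goldenRatio_lt_two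
lemma gr_irr : Irrational gr := goldenRatio_irrational

lemma gr_mul_gr_sub_one : gr * (gr - 1) = 1 := by
  have := gr_sq; nlinarith

lemma irr_nat_mul {k : ℕ} (hk : 1 ≤ k) : Irrational ((k : ℝ) * gr) :=
  gr_irr.natCast_mul (by omega)


lemma floor_bounds {k : ℕ} (hk : 1 ≤ k) :
    ((⌊(k : ℝ) * gr⌋ : ℝ)) < (k : ℝ) * gr ∧ (k : ℝ) * gr < (⌊(k : ℝ) * gr⌋ : ℝ) + 1 := by
  have h1 := Int.floor_le ((k : ℝ) * gr)
  have h2 := Int.lt_floor_add_one ((k : ℝ) * gr)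
  have h3 : ((k : ℝ) * gr) ≠ (⌊(k : ℝ) * gr⌋ : ℝ) := (irr_nat_mul hk).ne_int _
  exact ⟨lt_of_le_of_ne h1 (Ne.symm h3), h2⟩

lemma fract_eq (m : ℕ) : Int.fract ((m : ℝ) * (gr - 1)) = Int.fract ((m : ℝ) * gr) := by
  have : (m : ℝ) * (gr - 1) = (m : ℝ) * gr - (m : ℤ) := by push_cast; ring
  rw [this, Int.fract_sub_intCast]

lemma nat_le_floor {k : ℕ} (hk : 1 ≤ k) : (k : ℤ) ≤ ⌊(k : ℝ) * gr⌋ := by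
  apply Int.le_floor.2
  have : (k:ℝ) * 1 ≤ (k:ℝ) * gr :=
    mul_le_mul_of_nonneg_left (le_of_lt one_lt_gr) (by positivity)
  push_cast; linarith

lemma fract_char {m : ℕ} (hm : 1 ≤ m) :
    Bdef m ↔ 2 - gr < Int.fract ((m : ℝ) * gr) := by
  rw [← fract_eq]
  set x : ℝ := (m : ℝ) * (gr - 1) with hx
  have hgr1 : (0:ℝ) < gr - 1 := by have := one_lt_gr; linarith
  have hkey := gr_mul_gr_sub_one
  constructor
  · rintro ⟨k, hk, hfloor⟩
    obtain ⟨hlo, hhi⟩ := floor_bounds hk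
    rw [hfloor] at hlo hhi
    push_cast at hlo hhi
    have hxk : x < k := by nlinarith [mul_lt_mul_of_pos_right hlo hgr1]
    have hxlo : (k : ℝ) - 1 + (2 - gr) < x := by nlinarith [mul_lt_mul_of_pos_right hhi hgr1]
    have hfl : ⌊x⌋ = (k : ℤ) - 1 := by
      rw [Int.floor_eq_iff]
      constructor
      · push_cast; have := gr_lt_two; linarith
      · push_cast; linarith
    rw [Int.fract, hfl]
    push_cast
    linarith
  · intro hf
    set j := ⌊x⌋ with hj
    have hj0 : 0 ≤ j := by
      apply Int.floor_nonneg.2; positivity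
    have hfr : x - j = Int.fract x := rfl
    have hfx := hf
    rw [← hfr] at hfx
    have hxj1 : x < (j : ℝ) + 1 := Int.lt_floor_add_one x
    refine ⟨j.toNat + 1, by omega, ?_⟩
    have hcast : ((j.toNat + 1 : ℕ) : ℝ) = (j : ℝ) + 1 := by
      have h : ((j.toNat + 1 : ℕ) : ℤ) = j + 1 := by omega
      exact_mod_cast h
    rw [Int.floor_eq_iff]
    constructor
    ·
      rw [hcast]
      -- x > j + 2 - gr ⇒ m = x·gr > ((j+1) - (gr -1))·gr = (j+1)gr - 1... need m ≥ (j+1)gr -1 +? 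
      -- goal: ((m:ℤ):ℝ) ≤ ((j:ℝ)+1) * gr
      have hm' : ((j:ℝ) + 1) * gr - 1 < (m : ℝ) := by nlinarith
      -- and (j+1)*gr irrational so not equal to integer m; but ≤ suffices: from m > (j+1)gr - 1 we get m ≥ ⌈...⌉; 
      -- For 'le': we need (m:ℝ) ≤ (j+1)gr?? No: floor_eq_iff: ⌊y⌋ = m ↔ m ≤ y ∧ y < m+1.
      -- m ≤ (j+1)gr: from m < (j+1)gr which follows from x < j+1 times gr: m = x gr < (j+1) gr.
      push_cast
      nlinarith
    · rw [hcast]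
      push_cast
      nlinarith

lemma fract_ne {m : ℕ} (hm : 1 ≤ m) : Int.fract ((m : ℝ) * gr) ≠ 2 - gr := by
  intro h
  have h2 : ((m : ℝ) + 1) * gr = (⌊(m : ℝ) * gr⌋ : ℝ) + 2 := by
    have : Int.fract ((m : ℝ) * gr) = (m : ℝ) * gr - ⌊(m : ℝ) * gr⌋ := rfl
    rw [this] at h; ring_nf; ring_nf at h; linarith
  have hirr : Irrational (((m + 1 : ℕ)) * gr) := irr_nat_mul (by omega)
  apply hirr.ne_int (⌊(m : ℝ) * gr⌋ + 2)
  push_cast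
  push_cast at h2
  linarith

lemma jump_mem {m : ℕ} (hm : 1 ≤ m) (h : Bdef m) :
    ⌊((m : ℝ) + 1) * gr⌋ = ⌊(m : ℝ) * gr⌋ + 2 := by
  have hf := (fract_char hm).1 h
  have hfr : (m : ℝ) * gr = (⌊(m : ℝ) * gr⌋ : ℝ) + Int.fract ((m : ℝ) * gr) :=
    (Int.floor_add_fract _).symm
  have hfu : Int.fract ((m : ℝ) * gr) < 1 := Int.fract_lt_one _
  rw [Int.floor_eq_iff]
  have := one_lt_gr; have := gr_lt_two
  constructor
  · push_cast; nlinarith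
  · push_cast; nlinarith

lemma jump_not {m : ℕ} (hm : 1 ≤ m) (h : ¬ Bdef m) :
    ⌊((m : ℝ) + 1) * gr⌋ = ⌊(m : ℝ) * gr⌋ + 1 := by
  have hf : Int.fract ((m : ℝ) * gr) < 2 - gr := by
    rcases lt_trichotomy (Int.fract ((m : ℝ) * gr)) (2 - gr) with h' | h' | h'
    · exact h'
    · exact absurd h' (fract_ne hm)
    · exact absurd ((fract_char hm).2 h') h
  have hfr : (m : ℝ) * gr = (⌊(m : ℝ) * gr⌋ : ℝ) + Int.fract ((m : ℝ) * gr) :=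
    (Int.floor_add_fract _).symm
  have hf0 : 0 ≤ Int.fract ((m : ℝ) * gr) := Int.fract_nonneg _
  rw [Int.floor_eq_iff]
  have := one_lt_gr
  constructor
  · push_cast; nlinarith
  · push_cast; nlinarith

lemma floor_one_gr : ⌊(1 : ℝ) * gr⌋ = 1 := by
  rw [one_mul, Int.floor_eq_iff] <;> norm_num
  exact ⟨le_of_lt one_lt_gr, gr_lt_two⟩

lemma floor_floor {k : ℕ} (hk : 1 ≤ k) :
    ⌊(⌊(k : ℝ) * gr⌋ : ℝ) * gr⌋ = ⌊(k : ℝ) * gr⌋ + (k : ℤ) - 1 := by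
  obtain ⟨hlo, hhi⟩ := floor_bounds hk
  set a : ℤ := ⌊(k : ℝ) * gr⌋ with ha
  have hgr1 : (0:ℝ) < gr - 1 := by have := one_lt_gr; linarith
  have hkey := gr_mul_gr_sub_one
  rw [Int.floor_eq_iff]
  constructor
  · push_cast
    nlinarith [mul_lt_mul_of_pos_right hhi hgr1]
  · push_cast
    nlinarith [mul_lt_mul_of_pos_right hlo hgr1]

lemma floor_sq {k : ℕ} (hk : 1 ≤ k) :
    ⌊(k : ℝ) * gr ^ 2⌋ = ⌊(k : ℝ) * gr⌋ + (k : ℤ) := by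
  have : (k : ℝ) * gr ^ 2 = (k : ℝ) * gr + (k : ℕ) := by rw [gr_sq]; push_cast; ring
  rw [this, Int.floor_add_natCast]
-- combinatorial layer (proved earlier)

lemma self_le_sig (n : ℕ) : n ≤ sig n := Nat.le_add_right ..

lemma sig_eq : ∀ n : ℕ, (sig n : ℤ) = ⌊((n : ℝ) + 1) * gr⌋ - 1 := by
  intro n
  induction n using Nat.strong_induction_on with
  | _ n ih =>
    match n with
    | 0 =>
      have h1 := floor_one_gr
      rw [one_mul] at h1
      rw [sig_zero]
      norm_num [h1]
    | n + 1 =>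
      have hiff : fibWord n = 0 ↔ Bdef (n + 1) := by
        rw [fibWord_eq_zero_iff]
        constructor
        · rintro ⟨i, hi⟩
          have hin : i ≤ n := hi ▸ self_le_sig i
          have := ih i (by omega)
          refine ⟨i + 1, by omega, ?_⟩
          rw [hi] at this
          push_cast
          push_cast at this
          omega
        · rintro ⟨k, hk, hfl⟩
          have hkle : (k : ℤ) ≤ n + 1 := le_of_le_of_eq (nat_le_floor hk) hfl
          obtain ⟨i, rfl⟩ : ∃ i, k = i + 1 := ⟨k - 1, by omega⟩
          have hin : i ≤ n := by omega
          have hih := ih i (by omega)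
          refine ⟨i, ?_⟩
          push_cast at hfl
          have : (sig i : ℤ) = (n : ℤ) := by rw [hih, hfl]; ring
          exact_mod_cast this
      have hihn := ih n (by omega)
      by_cases h0 : fibWord n = 0
      · have hB := hiff.1 h0
        have hj := jump_mem (m := n + 1) (by omega) hB
        push_cast at hj ⊢
        rw [sig_succ, if_pos h0]
        push_cast
        linarith
      · have hB := fun h => h0 (hiff.2 h)
        have hj := jump_not (m := n + 1) (by omega) hB
        push_cast at hj ⊢
        rw [sig_succ, if_neg h0]
        push_cast
        linarith

lemma final_zero (m : ℕ) : (Nat.nth (fun k => fibWord k = 0) m : ℤ) + 1 = ⌊((m : ℝ) + 1) * gr⌋ := by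
  rw [nth_zero_eq m]
  have := sig_eq m
  omega

lemma final_one (m : ℕ) : (Nat.nth (fun k => fibWord k = 1) m : ℤ) + 1 = ⌊((m : ℝ) + 1) * gr ^ 2⌋ := by
  rw [nth_one_eq m]
  set a : ℤ := ⌊((m : ℝ) + 1) * gr⌋ with ha
  have h1 : (sig m : ℤ) = a - 1 := sig_eq m
  have h2 : (sig (sig m) : ℤ) = ⌊((sig m : ℝ) + 1) * gr⌋ - 1 := sig_eq (sig m)
  have hcast : ((sig m : ℝ) + 1) = (a : ℝ) := by
    have : ((sig m : ℤ) : ℝ) = (a : ℝ) - 1 := by exact_mod_cast congrArg (Int.cast : ℤ → ℝ) h1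
    push_cast at this ⊢
    linarith
  have hk : ((m + 1 : ℕ) : ℝ) = (m : ℝ) + 1 := by push_cast; ring
  have h3 : ⌊((a : ℝ)) * gr⌋ = a + (m + 1 : ℕ) - 1 := by
    have := floor_floor (k := m + 1) (by omega)
    rw [hk] at this
    rw [← ha] at this
    exact this
  have h4 : ⌊((m : ℝ) + 1) * gr ^ 2⌋ = a + (m + 1 : ℕ) := by
    have := floor_sq (k := m + 1) (by omega)
    rw [hk] at this
    rw [← ha] at this
    exact this
  rw [hcast] at h2
  push_cast at h2 h3 h4 ⊢
  omega

end FibAux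

/-- In the Fibonacci word, the position of the n-th `0` is ⌊nφ⌋ and the position of
the n-th `1` is ⌊nφ²⌋. -/
theorem fib_word_positions (n : ℕ) (hn : 1 ≤ n) :
    (fibPos 0 n : ℤ) = ⌊(n : ℝ) * φ⌋ ∧ (fibPos 1 n : ℤ) = ⌊(n : ℝ) * φ ^ 2⌋ := by
  obtain ⟨m, rfl⟩ : ∃ m, n = m + 1 := ⟨n - 1, by omega⟩
  have hφ : φ = FibAux.gr := rfl
  have hm1 : m + 1 - 1 = m := rfl
  have hc : ((m + 1 : ℕ) : ℝ) = (m : ℝ) + 1 := by push_cast; ring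
  constructor
  · have h := FibAux.final_zero m
    unfold fibPos
    rw [hm1, hφ, hc]
    push_cast
    push_cast at h
    linarith
  · have h := FibAux.final_one m
    unfold fibPos
    rw [hm1, hφ, hc]
    push_cast
    push_cast at h
    linarith
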